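/- arXiv:1505.03335 — 2 statements merged into one kernel-verified Lean document; each statement's English description precedes it below -/
import Mathlib

section
/- For 1 < α < 2 and for integers ℓ ≥ 4 and 2 ≤ m ≤ ⌊ℓ/2⌋ - 1, one has ϖ_m ϖ_{ℓ-m} ≥ ϖ_{m+1} ϖ_{ℓ-m-1}, where ϖ_k = (-1)^k binom(α, k); consequently ϖ_m ϖ_{ℓ-m} ≤ ϖ₂ ϖ_{ℓ-2} for all 2 ≤ m ≤ ⌊ℓ/2⌋. -/
open Finset

/-- Generalized binomial coefficient `binom α ℓ = α(α-1)⋯(α-ℓ+1)/ℓ!`. -/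
noncomputable def gbinom (α : ℝ) (ℓ : ℕ) : ℝ :=
  (∏ j ∈ Finset.range ℓ, (α - j)) / (Nat.factorial ℓ)

/-- Grünwald–Letnikov coefficients `ϖ_ℓ = (-1)^ℓ binom(α, ℓ)`. -/
noncomputable def glCoeff (α : ℝ) (ℓ : ℕ) : ℝ := (-1) ^ ℓ * gbinom α ℓ

lemma glCoeff_succ (α : ℝ) (k : ℕ) :
    glCoeff α (k + 1) = glCoeff α k * ((k : ℝ) - α) / (k + 1) := by
  have hf : (0 : ℝ) < (Nat.factorial k : ℝ) := by positivity
  have hk : (0 : ℝ) < (k : ℝ) + 1 := by positivity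
  simp only [glCoeff, gbinom, Finset.prod_range_succ, Nat.factorial_succ, pow_succ,
    Nat.cast_mul, Nat.cast_add, Nat.cast_one]
  field_simp
  ring

lemma glCoeff_nonneg (α : ℝ) (h1 : 1 < α) (h2 : α < 2) :
    ∀ k, 2 ≤ k → 0 ≤ glCoeff α k := by
  intro k hk
  induction k, hk using Nat.le_induction with
  | base =>
    simp only [glCoeff, gbinom]
    norm_num [Finset.prod_range_succ]
    nlinarith
  | succ n hn ih =>
    rw [glCoeff_succ]
    have hn2 : (2 : ℝ) ≤ (n : ℝ) := by exact_mod_cast hn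
    have : (0 : ℝ) ≤ (n : ℝ) - α := by linarith
    positivity

lemma glCoeff_step (α : ℝ) (h1 : 1 < α) (h2 : α < 2) :
    ∀ ℓ m : ℕ, 4 ≤ ℓ → 2 ≤ m → m ≤ ℓ / 2 - 1 →
      glCoeff α (m + 1) * glCoeff α (ℓ - m - 1) ≤ glCoeff α m * glCoeff α (ℓ - m) := by
  intro ℓ m hℓ hm hm2
  obtain ⟨n, hn, hmn⟩ : ∃ n, ℓ - m = n + 1 ∧ m + 1 ≤ n := by
    refine ⟨ℓ - m - 1, ?_, ?_⟩ <;> omega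
  have hn2 : ℓ - m - 1 = n := by omega
  rw [hn2, hn, glCoeff_succ, glCoeff_succ]
  have hm' : (2 : ℝ) ≤ (m : ℝ) := by exact_mod_cast hm
  have hmn' : (m : ℝ) + 1 ≤ (n : ℝ) := by exact_mod_cast hmn
  have hA := glCoeff_nonneg α h1 h2 m hm
  have hB := glCoeff_nonneg α h1 h2 n (by omega)
  have hq : ((m : ℝ) - α) / ((m : ℝ) + 1) ≤ ((n : ℝ) - α) / ((n : ℝ) + 1) := by
    rw [div_le_div_iff₀ (by linarith) (by linarith)]
    nlinarith
  calc glCoeff α m * ((m : ℝ) - α) / ((m : ℝ) + 1) * glCoeff α n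
      = (((m : ℝ) - α) / ((m : ℝ) + 1)) * (glCoeff α m * glCoeff α n) := by ring
    _ ≤ (((n : ℝ) - α) / ((n : ℝ) + 1)) * (glCoeff α m * glCoeff α n) := by
        apply mul_le_mul_of_nonneg_right hq (by positivity)
    _ = glCoeff α m * (glCoeff α n * ((n : ℝ) - α) / ((n : ℝ) + 1)) := by ring

theorem glCoeff_product_monotone (α : ℝ) (h1 : 1 < α) (h2 : α < 2) :
    (∀ ℓ m : ℕ, 4 ≤ ℓ → 2 ≤ m → m ≤ ℓ / 2 - 1 →
      glCoeff α (m + 1) * glCoeff α (ℓ - m - 1) ≤ glCoeff α m * glCoeff α (ℓ - m)) ∧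
    (∀ ℓ m : ℕ, 4 ≤ ℓ → 2 ≤ m → m ≤ ℓ / 2 →
      glCoeff α m * glCoeff α (ℓ - m) ≤ glCoeff α 2 * glCoeff α (ℓ - 2)) := by
  refine ⟨glCoeff_step α h1 h2, ?_⟩
  intro ℓ m hℓ hm
  induction m, hm using Nat.le_induction with
  | base => intro _; exact le_refl _
  | succ n hn ih =>
    intro hle
    have h1' : n ≤ ℓ / 2 - 1 := by omega
    have := glCoeff_step α h1 h2 ℓ n hℓ hn h1'
    have hsub : ℓ - (n + 1) = ℓ - n - 1 := by omega
    rw [hsub]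
    exact le_trans this (ih (by omega))
end

section
/- For 1 < α < 2 and x ∈ [0, π], the function Q(α,x) = 2 cos(α(θ(α,x) + (x-π)/2) - x), with θ(α,x) = -arctan((α-2) sin x / ((3α-2) - (α-2) cos x)), satisfies Q(α,x) ≤ 2 cos(πα/2) < 0. -/
open Real

/-- `θ(α,x) = -arctan((α-2) sin x / ((3α-2) - (α-2) cos x))`. -/
noncomputable def theta (α x : ℝ) : ℝ :=
  -Real.arctan ((α - 2) * Real.sin x / ((3 * α - 2) - (α - 2) * Real.cos x))

/-- `Q(α,x) = 2 cos(α(θ(α,x) + (x-π)/2) - x)`. -/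
noncomputable def Qfun (α x : ℝ) : ℝ :=
  2 * Real.cos (α * (theta α x + (x - π) / 2) - x)

lemma Dpos {a : ℝ} (h1 : 1 < a) (h2 : a < 2) (y : ℝ) :
    0 < (3 * a - 2) - (a - 2) * Real.cos y := by
  nlinarith [Real.cos_le_one y, Real.neg_one_le_cos y]

lemma theta_eq {a : ℝ} (h1 : 1 < a) (h2 : a < 2) (y : ℝ) :
    theta a y = Real.arctan ((2 - a) * Real.sin y / ((3 * a - 2) - (a - 2) * Real.cos y)) := by
  unfold theta
  rw [show (a - 2) * Real.sin y / ((3 * a - 2) - (a - 2) * Real.cos y)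
      = -((2 - a) * Real.sin y / ((3 * a - 2) - (a - 2) * Real.cos y)) by ring,
    Real.arctan_neg, neg_neg]

/-- Key bound: `α θ(α,x) ≤ (2-α) x / 2` for `x ≥ 0`. -/
lemma theta_le {a : ℝ} (h1 : 1 < a) (h2 : a < 2) {x : ℝ} (hx : 0 ≤ x) :
    a * theta a x ≤ (2 - a) * x / 2 := by
  set F : ℝ → ℝ := fun y =>
    (2 - a) * y / (2 * a) -
      Real.arctan ((2 - a) * Real.sin y / ((3 * a - 2) - (a - 2) * Real.cos y)) with hF
  have ha0 : (0:ℝ) < a := by linarith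
  have hderiv : ∀ y : ℝ, HasDerivAt F
      ((2 - a) / (2 * a) -
        1 / (1 + ((2 - a) * Real.sin y / ((3 * a - 2) - (a - 2) * Real.cos y)) ^ 2) *
          (((2 - a) * Real.cos y * ((3 * a - 2) - (a - 2) * Real.cos y) -
            (2 - a) * Real.sin y * ((a - 2) * Real.sin y)) /
              ((3 * a - 2) - (a - 2) * Real.cos y) ^ 2)) y := by
    intro y
    have hD := Dpos h1 h2 y
    have hN : HasDerivAt (fun z => (2 - a) * Real.sin z) ((2 - a) * Real.cos y) y :=
      (Real.hasDerivAt_sin y).const_mul _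
    have hden : HasDerivAt (fun z => (3 * a - 2) - (a - 2) * Real.cos z)
        ((a - 2) * Real.sin y) y := by
      have := ((Real.hasDerivAt_cos y).const_mul (a - 2)).const_sub (3 * a - 2)
      exact this.congr_deriv (by ring)
    have hv := hN.div hden (ne_of_gt hD)
    have harctan := hv.arctan
    have hlin : HasDerivAt (fun z => (2 - a) * z / (2 * a)) ((2 - a) / (2 * a)) y := by
      have heq : (fun z => (2 - a) * z / (2 * a)) = (fun z => (2 - a) / (2 * a) * z) := by
        funext z; ring
      rw [heq]
      simpa using (hasDerivAt_id y).const_mul ((2 - a) / (2 * a))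
    exact hlin.sub harctan
  have hF' : ∀ y : ℝ, 0 ≤ (2 - a) / (2 * a) -
      1 / (1 + ((2 - a) * Real.sin y / ((3 * a - 2) - (a - 2) * Real.cos y)) ^ 2) *
        (((2 - a) * Real.cos y * ((3 * a - 2) - (a - 2) * Real.cos y) -
          (2 - a) * Real.sin y * ((a - 2) * Real.sin y)) /
            ((3 * a - 2) - (a - 2) * Real.cos y) ^ 2) := by
    intro y
    have hD := Dpos h1 h2 y
    set c := Real.cos y
    set s := Real.sin y
    have hsc : s ^ 2 + c ^ 2 = 1 := Real.sin_sq_add_cos_sq y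
    have hc1 : c ≤ 1 := Real.cos_le_one y
    have heq : 1 / (1 + ((2 - a) * s / ((3 * a - 2) - (a - 2) * c)) ^ 2) *
        (((2 - a) * c * ((3 * a - 2) - (a - 2) * c) -
          (2 - a) * s * ((a - 2) * s)) / ((3 * a - 2) - (a - 2) * c) ^ 2)
        = (2 - a) * (c * ((3 * a - 2) - (a - 2) * c) + (2 - a) * s ^ 2) /
            (((3 * a - 2) - (a - 2) * c) ^ 2 + (2 - a) ^ 2 * s ^ 2) := by
      have hD' : ((3 * a - 2) - (a - 2) * c) ≠ 0 := ne_of_gt hD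
      have hE : ((3 * a - 2) - (a - 2) * c) ^ 2 + ((2 - a) * s) ^ 2 ≠ 0 := by positivity
      rw [div_pow, one_add_div (pow_ne_zero 2 hD')]
      field_simp
      ring
    rw [heq, sub_nonneg, div_le_div_iff₀ (by positivity) (by positivity)]
    have hid : (2 - a) * ((3 * a - 2 - (a - 2) * c) ^ 2 + (2 - a) ^ 2 * s ^ 2) -
        (2 - a) * (c * (3 * a - 2 - (a - 2) * c) + (2 - a) * s ^ 2) * (2 * a)
        = (2 - a) * (4 * (a - 1) * (3 * a - 2) * (1 - c)) := by
      linear_combination ((2 - a) ^ 2 * (2 - 3 * a)) * hsc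
    nlinarith [mul_nonneg (mul_nonneg
      (by nlinarith : (0:ℝ) ≤ (2 - a) * (a - 1)) (by nlinarith : (0:ℝ) ≤ 3 * a - 2))
      (by nlinarith : (0:ℝ) ≤ 1 - c)]
  have hmono : Monotone F :=
    monotone_of_deriv_nonneg (fun y => (hderiv y).differentiableAt)
      (fun y => by rw [(hderiv y).deriv]; exact hF' y)
  have hF0 : F 0 = 0 := by simp [hF]
  have := hmono hx
  rw [hF0] at this
  have hle : Real.arctan ((2 - a) * Real.sin x / ((3 * a - 2) - (a - 2) * Real.cos x))
      ≤ (2 - a) * x / (2 * a) := by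
    simpa [hF, sub_nonneg] using this
  rw [theta_eq h1 h2]
  calc a * Real.arctan ((2 - a) * Real.sin x / ((3 * a - 2) - (a - 2) * Real.cos x))
      ≤ a * ((2 - a) * x / (2 * a)) := by
        exact mul_le_mul_of_nonneg_left hle (le_of_lt ha0)
    _ = (2 - a) * x / 2 := by field_simp

theorem Q_neg (α : ℝ) (h1 : 1 < α) (h2 : α < 2) (x : ℝ) (hx : x ∈ Set.Icc (0 : ℝ) π) :
    Qfun α x ≤ 2 * Real.cos (π * α / 2) ∧ 2 * Real.cos (π * α / 2) < 0 := by
  obtain ⟨hx0, hxπ⟩ := hx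
  have hπ := Real.pi_pos
  have hθ0 : 0 ≤ theta α x := by
    rw [theta_eq h1 h2]
    rw [← Real.arctan_zero]
    apply Real.arctan_strictMono.monotone
    have hs : 0 ≤ Real.sin x := Real.sin_nonneg_of_nonneg_of_le_pi hx0 hxπ
    exact div_nonneg (mul_nonneg (by linarith) hs) (le_of_lt (Dpos h1 h2 x))
  have hθle := theta_le h1 h2 hx0
  set Z := α * (theta α x + (x - π) / 2) - x with hZ
  have hZub : Z ≤ -(π * α / 2) := by
    have : α * theta α x ≤ (2 - α) * x / 2 := hθle
    rw [hZ]; nlinarith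
  have hZlb : -π ≤ Z := by
    have h1' : 0 ≤ α * theta α x := mul_nonneg (by linarith) hθ0
    rw [hZ]
    nlinarith [mul_nonneg (sub_nonneg.2 hxπ) (by linarith : (0:ℝ) ≤ 2 - α)]
  constructor
  · have hcos : Real.cos Z ≤ Real.cos (π * α / 2) := by
      rw [← Real.cos_neg Z]
      apply Real.cos_le_cos_of_nonneg_of_le_pi (by positivity) (by linarith) (by linarith)
    unfold Qfun
    rw [← hZ]
    linarith
  · have : Real.cos (π * α / 2) < 0 := by
      apply Real.cos_neg_of_pi_div_two_lt_of_lt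
      · nlinarith
      · nlinarith
    linarith
end
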